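/- arXiv:1512.01021 — 3 statements merged into one kernel-verified Lean document; each statement's English description precedes it below -/
import Mathlib

section
/- For every nonempty word u over an alphabet A (with decidable equality) there exist n ≥ 1, letters a_1, …, a_n and words u_1, …, u_n such that u = [a_1] ++ u_1 ++ [a_2] ++ u_2 ++ ⋯ ++ [a_n] ++ u_n, for each i = 2, …, n the letter a_i does not occur in the prefix [a_1] ++ u_1 ++ ⋯ ++ [a_{i-1}] ++ u_{i-1}, the letters a_1, …, a_n are pairwise distinct, and the content of u equals {a_1, …, a_n}. (Existence of the first-occurrences factorization of a word.) -/
set_option maxHeartbeats 1000000 in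
private theorem foF_aux {A : Type*} [DecidableEq A] :
    ∀ (n : ℕ) (a : A) (t : List A), t.length < n → ∀ (S : Finset A), a ∉ S →
    ∃ (as : List A) (us : List (List A)),
      as.length = us.length ∧
      0 < as.length ∧
      a :: t = (List.zipWith (fun a w => a :: w) as us).flatten ∧
      (∀ i (h : i < as.length),
        as.get ⟨i, h⟩ ∉ S ∪
          ((List.zipWith (fun a w => a :: w) as us).take i).flatten.toFinset) ∧
      S ∪ (a :: t).toFinset = S ∪ as.toFinset := by
  intro n
  induction n with
  | zero => intro a t h; omega
  | succ n ih =>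
    intro a t ht S haS
    set w := t.takeWhile (· ∈ insert a S) with hw
    set r := t.dropWhile (· ∈ insert a S) with hr
    have htwr : w ++ r = t := List.takeWhile_append_dropWhile ..
    have hwmem : ∀ x ∈ w, x ∈ insert a S := by
      intro x hx
      have := List.mem_takeWhile_imp hx
      simpa using this
    match hrc : r with
    | [] =>
      refine ⟨[a], [t], rfl, by norm_num, by simp, ?_, ?_⟩
      · intro i hi
        have h0 : i = 0 := by simp at hi; omega
        subst h0
        simpa using haS
      · have htw : t = w := by simpa using htwr.symm
        have hwx : ∀ x ∈ t, x = a ∨ x ∈ S := fun x h => by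
          simpa using hwmem x (htw ▸ h)
        ext x
        simp only [Finset.mem_union, List.toFinset_cons, Finset.mem_insert,
          List.mem_toFinset, List.toFinset_nil, Finset.notMem_empty, or_false]
        have := hwx x
        tauto
    | b :: r' =>
      have hne : (List.dropWhile (fun x => decide (x ∈ insert a S)) t) ≠ [] := by
        rw [← hr]; simp
      have hb : b ∉ insert a S := by
        have := List.head_dropWhile_not (fun x => decide (x ∈ insert a S)) (l := t) hne
        simp only [← hr, List.head_cons] at this
        simpa using this
      have hlen : r'.length < n := by
        have : w.length + (r'.length + 1) = t.length := by
          rw [← htwr]; simp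
        omega
      obtain ⟨as', us', h1, h2, h3, h4, h5⟩ := ih b r' hlen (insert a S) hb
      refine ⟨a :: as', w :: us', by simpa using h1, by simp, ?_, ?_, ?_⟩
      · simp only [List.zipWith_cons_cons, List.flatten_cons]
        rw [← h3, ← htwr]
        simp
      · intro i hi
        match i with
        | 0 => simpa using haS
        | (j+1) =>
          have hj : j < as'.length := by simpa using hi
          have h4' := h4 j hj
          simp only [List.get_cons_succ]
          intro hmem
          apply h4'
          have hwx : as'.get ⟨j, hj⟩ ∈ w → as'.get ⟨j, hj⟩ = a ∨ as'.get ⟨j, hj⟩ ∈ S :=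
            fun h => by simpa using hwmem _ h
          simp only [List.zipWith_cons_cons, List.take_succ_cons, List.flatten_cons,
            List.toFinset_append, List.toFinset_cons, Finset.mem_union,
            Finset.mem_insert, List.mem_toFinset, List.get_eq_getElem] at hmem hwx ⊢
          tauto
      · ext x
        have keyx : x ∈ insert a S ∪ (b :: r').toFinset ↔ x ∈ insert a S ∪ as'.toFinset := by
          rw [h5]
        have hwx : x ∈ w → x = a ∨ x ∈ S := fun h => by simpa using hwmem x h
        rw [← htwr]
        simp only [Finset.mem_union, Finset.mem_insert, List.toFinset_cons,
          List.toFinset_append, List.mem_toFinset, Finset.mem_union,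
          Finset.mem_insert] at keyx ⊢
        tauto

/-- Existence of the first-occurrences factorization of a nonempty word:
`u = [a₁] ++ u₁ ++ [a₂] ++ u₂ ++ ⋯ ++ [aₙ] ++ uₙ` with `n ≥ 1`, each `aᵢ`
(for `i ≥ 2`) not occurring in the preceding prefix, the `aᵢ` pairwise
distinct, and the content of `u` equal to `{a₁, …, aₙ}`. -/
theorem first_occurrences_factorization_exists {A : Type*} [DecidableEq A]
    (u : List A) (hu : u ≠ []) :
    ∃ (as : List A) (us : List (List A)),
      as.length = us.length ∧
      0 < as.length ∧
      u = (List.zipWith (fun a w => a :: w) as us).flatten ∧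
      (∀ i (h : i < as.length), 0 < i →
        as.get ⟨i, h⟩ ∉
          ((List.zipWith (fun a w => a :: w) as us).take i).flatten.toFinset) ∧
      as.Nodup ∧
      u.toFinset = as.toFinset := by
  obtain ⟨a, t, rfl⟩ := List.exists_cons_of_ne_nil hu
  obtain ⟨as, us, h1, h2, h3, h4, h5⟩ :=
    foF_aux (t.length + 1) a t (by omega) ∅ (Finset.notMem_empty a)
  have hnotin : ∀ i (h : i < as.length),
      as.get ⟨i, h⟩ ∉
        ((List.zipWith (fun a w => a :: w) as us).take i).flatten.toFinset := by
    intro i h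
    have := h4 i h
    simpa using this
  refine ⟨as, us, h1, h2, h3, fun i h _ => hnotin i h, ?_, by simpa using h5⟩
  rw [List.nodup_iff_injective_get]
  intro ⟨i, hi⟩ ⟨j, hj⟩ hij
  by_contra hne
  simp only [Fin.mk.injEq] at hne
  wlog hlt : i < j generalizing i j
  · exact this j hj i hi hij.symm (Ne.symm hne) (by omega)
  apply hnotin j hj
  rw [← hij]
  have hzl : (List.zipWith (fun a w => a :: w) as us).length = as.length := by
    simp [h1]
  have hij' : i < (List.zipWith (fun a w => a :: w) as us).length := by omega
  have hblock : (List.zipWith (fun a w => a :: w) as us).get ⟨i, hij'⟩ =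
      as.get ⟨i, hi⟩ :: us.get ⟨i, by omega⟩ := by
    simp [List.get_eq_getElem, List.getElem_zipWith]
  have hmem : (List.zipWith (fun a w => a :: w) as us).get ⟨i, hij'⟩ ∈
      (List.zipWith (fun a w => a :: w) as us).take j := by
    rw [List.mem_take_iff_getElem]
    exact ⟨i, by simp [List.get_eq_getElem]; omega, by simp [List.get_eq_getElem]⟩
  rw [List.mem_toFinset, List.mem_flatten]
  exact ⟨_, hmem, by rw [hblock]; exact List.mem_cons_self⟩
end

section
/- The first-occurrences factorization of a nonempty word is unique: if u = [a_1] ++ u_1 ++ ⋯ ++ [a_n] ++ u_n = [b_1] ++ v_1 ++ ⋯ ++ [b_m] ++ v_m are two factorizations such that a_i ∉ c([a_1] ++ u_1 ++ ⋯ ++ [a_{i-1}] ++ u_{i-1}) for i = 2, …, n, c(u) = {a_1, …, a_n}, b_j ∉ c([b_1] ++ v_1 ++ ⋯ ++ [b_{j-1}] ++ v_{j-1}) for j = 2, …, m, and c(u) = {b_1, …, b_m}, then n = m and a_i = b_i, u_i = v_i for all i. -/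

lemma mem_of_prefix_longer {A : Type*} {u0 v0 : List A} {a1 : A} {r1 r2 : List A}
    (h : u0 ++ a1 :: r1 = v0 ++ r2) (hlt : u0.length < v0.length) : a1 ∈ v0 := by
  have h1 : (u0 ++ a1 :: r1)[u0.length]'(by simp) = a1 := by
    rw [List.getElem_append_right (le_refl _)]
    simp
  have h2 : (v0 ++ r2)[u0.length]'(by rw [← h]; simp) = v0[u0.length]'(hlt) :=
    List.getElem_append_left hlt
  have h3 : (u0 ++ a1 :: r1)[u0.length]'(by simp) = (v0 ++ r2)[u0.length]'(by rw [← h]; simp) := by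
    congr 1
  rw [h1] at h3
  rw [← h3] at h2
  exact h2 ▸ List.getElem_mem _

lemma no_lt {A : Type*} [DecidableEq A] {S : Finset A} {u u0 v0 : List A} {a : A}
    {as' bs' : List A} {us' vs' : List (List A)}
    (hlen1 : as'.length = us'.length)
    (h1 : u = a :: (u0 ++ (List.zipWith (fun x w => x :: w) as' us').flatten))
    (h2 : u = a :: (v0 ++ (List.zipWith (fun x w => x :: w) bs' vs').flatten))
    (hA : ∀ i (h : i < as'.length), as'.get ⟨i, h⟩ ∉ S ∧ as'.get ⟨i, h⟩ ∉ (a :: u0 : List A).toFinset)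
    (hB : ∀ j (h : j < bs'.length), bs'.get ⟨j, h⟩ ∉ (a :: v0 : List A).toFinset)
    (hC : ∀ x ∈ u, x ∈ S ∨ x ∈ a :: bs') :
    ¬ u0.length < v0.length := by
  intro hlt
  match as', us' with
  | [], _ =>
    -- u = a :: u0, but also a :: v0 ++ ... with |v0| > |u0|
    simp only [List.zipWith_nil_left, List.flatten_nil, List.append_nil] at h1
    have := h1 ▸ h2
    have hl := congrArg List.length this
    simp at hl
    omega
  | a1 :: as'', us' =>
    match us', hlen1 with
    | w :: us'', _ =>
      have heq : u0 ++ a1 :: (w ++ (List.zipWith (fun x w => x :: w) as'' us'').flatten)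
          = v0 ++ (List.zipWith (fun x w => x :: w) bs' vs').flatten := by
        have := h1 ▸ h2
        simpa using this
      have ha1v0 : a1 ∈ v0 := mem_of_prefix_longer heq hlt
      have ha1 := hA 0 (by simp)
      change a1 ∉ S ∧ a1 ∉ (a :: u0 : List A).toFinset at ha1
      -- a1 ∈ u
      have ha1u : a1 ∈ u := by
        rw [h1]; simp
      rcases hC a1 ha1u with hS | hmem
      · exact ha1.1 hS
      · rcases List.mem_cons.mp hmem with rfl | hbs'
        · exact ha1.2 (by simp)
        · obtain ⟨j, hget⟩ := List.mem_iff_get.mp hbs'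
          have := hB j j.isLt
          rw [hget] at this
          exact this (by simp [ha1v0])

lemma fof_aux {A : Type*} [DecidableEq A] (as : List A) :
    ∀ (S : Finset A) (u bs : List A) (us vs : List (List A)),
      as.length = us.length → bs.length = vs.length →
      u = (List.zipWith (fun a w => a :: w) as us).flatten →
      u = (List.zipWith (fun b w => b :: w) bs vs).flatten →
      (∀ i (h : i < as.length), as.get ⟨i, h⟩ ∉ S ∧
        as.get ⟨i, h⟩ ∉ ((List.zipWith (fun a w => a :: w) as us).take i).flatten.toFinset) →
      (∀ j (h : j < bs.length), bs.get ⟨j, h⟩ ∉ S ∧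
        bs.get ⟨j, h⟩ ∉ ((List.zipWith (fun b w => b :: w) bs vs).take j).flatten.toFinset) →
      (∀ x ∈ u, x ∈ S ∨ x ∈ as) → (∀ x ∈ u, x ∈ S ∨ x ∈ bs) →
      as = bs ∧ us = vs := by
  induction as with
  | nil =>
    intro S u bs us vs hlen1 hlen2 h1 h2 _ _ _ hc2
    -- u = []
    simp only [List.zipWith_nil_left, List.flatten_nil] at h1
    subst h1
    match bs, vs, hlen2 with
    | [], [], _ =>
      constructor
      · rfl
      · match us, hlen1 with
        | [], _ => rfl
    | b :: bs', v :: vs', _ =>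
      exfalso
      simp at h2
  | cons a as' ih =>
    intro S u bs us vs hlen1 hlen2 h1 h2 hp1 hp2 hc1 hc2
    match us, hlen1 with
    | u0 :: us', hlen1 =>
    have hlen1' : as'.length = us'.length := by simpa using hlen1
    -- u is nonempty and starts with a
    rw [List.zipWith_cons_cons, List.flatten_cons] at h1
    match bs, vs, hlen2 with
    | [], [], _ =>
      exfalso
      simp only [List.zipWith_nil_left, List.flatten_nil] at h2
      rw [h2] at h1
      exact absurd h1.symm (by simp)
    | b :: bs', v0 :: vs', hlen2 =>
    have hlen2' : bs'.length = vs'.length := by simpa using hlen2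
    rw [List.zipWith_cons_cons, List.flatten_cons] at h2
    -- a = b
    have hab : a = b := by
      have h3 := h1.symm.trans h2
      simp only [List.cons_append, List.cons.injEq] at h3
      exact h3.1
    subst hab
    -- derive simplified hpre facts
    have hA1 : ∀ i (h : i < as'.length), as'.get ⟨i, h⟩ ∉ S ∧
        as'.get ⟨i, h⟩ ∉ (a :: u0 : List A).toFinset := by
      intro i h
      have := hp1 (i+1) (by simpa using Nat.succ_lt_succ h)
      simp only [List.get_cons_succ] at this
      refine ⟨this.1, fun hmem => this.2 ?_⟩
      rw [List.zipWith_cons_cons, List.take_succ_cons, List.flatten_cons, List.toFinset_append]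
      exact Finset.mem_union_left _ hmem
    have hB1 : ∀ j (h : j < bs'.length), bs'.get ⟨j, h⟩ ∉ (a :: v0 : List A).toFinset := by
      intro j h
      have := hp2 (j+1) (by simpa using Nat.succ_lt_succ h)
      simp only [List.get_cons_succ] at this
      intro hmem
      apply this.2
      rw [List.zipWith_cons_cons, List.take_succ_cons, List.flatten_cons, List.toFinset_append]
      exact Finset.mem_union_left _ hmem
    have hA1' : ∀ j (h : j < as'.length), as'.get ⟨j, h⟩ ∉ (a :: u0 : List A).toFinset :=
      fun j h => (hA1 j h).2
    have hB1' : ∀ j (h : j < bs'.length), bs'.get ⟨j, h⟩ ∉ S ∧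
        bs'.get ⟨j, h⟩ ∉ (a :: v0 : List A).toFinset := by
      intro j h
      have := hp2 (j+1) (by simpa using Nat.succ_lt_succ h)
      simp only [List.get_cons_succ] at this
      exact ⟨this.1, hB1 j h⟩
    -- lengths of u0 v0 equal
    have h1' : u = a :: (u0 ++ (List.zipWith (fun x w => x :: w) as' us').flatten) := by
      simpa using h1
    have h2' : u = a :: (v0 ++ (List.zipWith (fun x w => x :: w) bs' vs').flatten) := by
      simpa using h2
    have hleq : u0.length = v0.length := by
      have hn1 := no_lt hlen1' h1' h2' hA1 hB1 hc2
      have hn2 := no_lt hlen2' h2' h1' hB1' hA1' hc1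
      omega
    -- u0 = v0 and rests equal
    have happ : u0 ++ (List.zipWith (fun x w => x :: w) as' us').flatten
        = v0 ++ (List.zipWith (fun x w => x :: w) bs' vs').flatten := by
      have := h1' ▸ h2'
      simpa using this
    obtain ⟨huv, hrest⟩ := List.append_inj happ hleq
    subst huv
    -- apply IH
    set r := (List.zipWith (fun x w => x :: w) as' us').flatten with hr
    have hrsub : ∀ x ∈ r, x ∈ u := by
      intro x hx
      rw [h1']
      simp [hx]
    have hIH := ih (S ∪ (a :: u0 : List A).toFinset) r bs' us' vs' hlen1' hlen2' rfl hrest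
      ?_ ?_ ?_ ?_
    · exact ⟨by rw [hIH.1], by rw [hIH.2]⟩
    · intro i h
      have h0 := hp1 (i+1) (by simpa using Nat.succ_lt_succ h)
      simp only [List.get_cons_succ] at h0
      rw [List.zipWith_cons_cons, List.take_succ_cons, List.flatten_cons, List.toFinset_append] at h0
      constructor
      · intro hmem
        rcases Finset.mem_union.mp hmem with hs | ht
        · exact h0.1 hs
        · exact h0.2 (Finset.mem_union_left _ ht)
      · intro hmem
        exact h0.2 (Finset.mem_union_right _ hmem)
    · intro j h
      have h0 := hp2 (j+1) (by simpa using Nat.succ_lt_succ h)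
      simp only [List.get_cons_succ] at h0
      rw [List.zipWith_cons_cons, List.take_succ_cons, List.flatten_cons, List.toFinset_append] at h0
      constructor
      · intro hmem
        rcases Finset.mem_union.mp hmem with hs | ht
        · exact h0.1 hs
        · exact h0.2 (Finset.mem_union_left _ ht)
      · intro hmem
        exact h0.2 (Finset.mem_union_right _ hmem)
    · intro x hx
      rcases hc1 x (hrsub x hx) with hs | hm
      · exact Or.inl (Finset.mem_union_left _ hs)
      · rcases List.mem_cons.mp hm with rfl | hm'
        · exact Or.inl (Finset.mem_union_right _ (by simp))
        · exact Or.inr hm'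
    · intro x hx
      rcases hc2 x (hrsub x hx) with hs | hm
      · exact Or.inl (Finset.mem_union_left _ hs)
      · rcases List.mem_cons.mp hm with rfl | hm'
        · exact Or.inl (Finset.mem_union_right _ (by simp))
        · exact Or.inr hm'

/-- Uniqueness of the first-occurrences factorization of a nonempty word:
two factorizations `u = [a₁] ++ u₁ ++ ⋯ ++ [aₙ] ++ uₙ = [b₁] ++ v₁ ++ ⋯ ++ [bₘ] ++ vₘ`
satisfying the first-occurrences conditions coincide (so `n = m`, `aᵢ = bᵢ`,
`uᵢ = vᵢ` for all `i`). -/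
theorem first_occurrences_factorization_unique {A : Type*} [DecidableEq A]
    (u : List A) (hu : u ≠ [])
    (as bs : List A) (us vs : List (List A))
    (hlen₁ : as.length = us.length) (hlen₂ : bs.length = vs.length)
    (hfact₁ : u = (List.zipWith (fun a w => a :: w) as us).flatten)
    (hfact₂ : u = (List.zipWith (fun b w => b :: w) bs vs).flatten)
    (hpre₁ : ∀ i (h : i < as.length), 0 < i →
      as.get ⟨i, h⟩ ∉
        ((List.zipWith (fun a w => a :: w) as us).take i).flatten.toFinset)
    (hpre₂ : ∀ j (h : j < bs.length), 0 < j →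
      bs.get ⟨j, h⟩ ∉
        ((List.zipWith (fun b w => b :: w) bs vs).take j).flatten.toFinset)
    (hcont₁ : u.toFinset = as.toFinset)
    (hcont₂ : u.toFinset = bs.toFinset) :
    as = bs ∧ us = vs := by
  refine fof_aux as ∅ u bs us vs hlen₁ hlen₂ hfact₁ hfact₂ ?_ ?_ ?_ ?_
  · intro i h
    refine ⟨by simp, ?_⟩
    rcases Nat.eq_zero_or_pos i with rfl | hi
    · simp
    · exact hpre₁ i h hi
  · intro j h
    refine ⟨by simp, ?_⟩
    rcases Nat.eq_zero_or_pos j with rfl | hj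
    · simp
    · exact hpre₂ j h hj
  · intro x hx
    right
    have : x ∈ u.toFinset := List.mem_toFinset.mpr hx
    rw [hcont₁] at this
    exact List.mem_toFinset.mp this
  · intro x hx
    right
    have : x ∈ u.toFinset := List.mem_toFinset.mpr hx
    rw [hcont₂] at this
    exact List.mem_toFinset.mp this
end

section
/- Let S be a compact Hausdorff, totally disconnected topological semigroup, i.e., a compact Hausdorff totally disconnected space equipped with an associative and jointly continuous multiplication. Then for every s ∈ S, the topological closure of the set {s^n : n ≥ 1} contains exactly one idempotent. (Well-definedness of the ω-power on profinite semigroups.) -/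
/-- Positive powers in a semigroup: `spow s n = s ^ (n + 1)`, so that
`{spow s n : n ∈ ℕ} = {s ^ m : m ≥ 1}`. -/
def spow {S : Type*} [Semigroup S] (s : S) : ℕ → S
  | 0 => s
  | n + 1 => spow s n * s

section Aux

variable {S : Type*} [Semigroup S] [TopologicalSpace S] [CompactSpace S] [T2Space S]
  [ContinuousMul S]

lemma spow_add {S : Type*} [Semigroup S] (s : S) (a b : ℕ) :
    spow s (a + b + 1) = spow s a * spow s b := by
  induction b with
  | zero => rfl
  | succ b ih =>
    have : a + (b + 1) + 1 = (a + b + 1) + 1 := by ring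
    rw [this, spow, ih, spow, mul_assoc]

/-- The closed set generated by powers `spow s m` with `m ≥ n`. -/
def powClos (s : S) (n : ℕ) : Set S := closure (spow s '' Set.Ici n)

lemma powClos_zero (s : S) : powClos s 0 = closure (Set.range (spow s)) := by
  unfold powClos
  rw [show Set.Ici (0 : ℕ) = Set.univ from Set.ext fun n => by simp, Set.image_univ]

lemma isClosed_powClos (s : S) (n : ℕ) : IsClosed (powClos s n) := isClosed_closure

lemma isCompact_powClos (s : S) (n : ℕ) : IsCompact (powClos s n) :=
  (isClosed_powClos s n).isCompact

lemma powClos_antitone (s : S) : Antitone (powClos s) := fun m n h =>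
  closure_mono (Set.image_mono (Set.Ici_subset_Ici.2 h))

lemma spow_mem_powClos {s : S} {m n : ℕ} (h : n ≤ m) : spow s m ∈ powClos s n :=
  subset_closure ⟨m, h, rfl⟩

lemma powClos_nonempty (s : S) (n : ℕ) : (powClos s n).Nonempty :=
  ⟨spow s n, spow_mem_powClos le_rfl⟩

lemma mul_mem_powClos {s x y : S} {n m : ℕ} (hx : x ∈ powClos s n) (hy : y ∈ powClos s m) :
    x * y ∈ powClos s (n + m + 1) := by
  refine map_mem_closure₂ continuous_mul hx hy ?_
  rintro a ⟨i, hi, rfl⟩ b ⟨j, hj, rfl⟩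
  simp only [Set.mem_Ici] at hi hj
  exact ⟨i + j + 1, Set.mem_Ici.2 (by omega), spow_add s i j⟩

lemma powClos_comm {s x y : S} (hx : x ∈ powClos s 0) (hy : y ∈ powClos s 0) :
    x * y = y * x := by
  have hcl : Set.EqOn (fun p : S × S => p.1 * p.2) (fun p : S × S => p.2 * p.1)
      (closure ((spow s '' Set.Ici 0) ×ˢ (spow s '' Set.Ici 0))) := by
    refine Set.EqOn.closure ?_ (continuous_fst.mul continuous_snd)
      (continuous_snd.mul continuous_fst)
    rintro ⟨a, b⟩ ⟨⟨i, -, rfl⟩, ⟨j, -, rfl⟩⟩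
    simp only
    rw [← spow_add, ← spow_add, Nat.add_comm i j]
  have := hcl (x := (x, y)) (by rw [closure_prod_eq]; exact ⟨hx, hy⟩)
  simpa using this

/-- The kernel: intersection of all `powClos s n`. -/
def powKer (s : S) : Set S := ⋂ n, powClos s n

lemma powKer_nonempty (s : S) : (powKer s).Nonempty :=
  IsCompact.nonempty_iInter_of_directed_nonempty_isCompact_isClosed _
    ((powClos_antitone s).directed_ge) (powClos_nonempty s) (isCompact_powClos s)
    (isClosed_powClos s)

lemma powKer_subset (s : S) (n : ℕ) : powKer s ⊆ powClos s n := Set.iInter_subset _ n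

/-- Step 1: division by a power. -/
lemma spow_div {s z : S} (n : ℕ) (hz : z ∈ powKer s) :
    ∃ k ∈ powKer s, spow s n * k = z := by
  -- for each m, z ∈ (spow s n * ·) '' powClos s m
  have key : ∀ m : ℕ, z ∈ (fun y => spow s n * y) '' powClos s m := by
    intro m
    have himg : IsCompact ((fun y => spow s n * y) '' powClos s m) :=
      (isCompact_powClos s m).image (continuous_const.mul continuous_id)
    have hsub : powClos s (n + m + 1) ⊆ (fun y => spow s n * y) '' powClos s m := by
      apply closure_minimal ?_ himg.isClosed
      rintro _ ⟨j, hj, rfl⟩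
      simp only [Set.mem_Ici] at hj
      refine ⟨spow s (j - n - 1), spow_mem_powClos (by omega), ?_⟩
      show spow s n * spow s (j - n - 1) = spow s j
      rw [← spow_add]
      congr 1
      omega
    exact hsub (powKer_subset s (n + m + 1) hz)
  -- intersect the nonempty compact sets
  set D : ℕ → Set S := fun m => powClos s m ∩ {k | spow s n * k = z} with hD
  have hDcl : ∀ m, IsClosed (D m) :=
    fun m => (isClosed_powClos s m).inter (isClosed_eq (continuous_const.mul continuous_id)
      continuous_const)
  have hDne : ∀ m, (D m).Nonempty := by
    intro m
    obtain ⟨k, hk, hk2⟩ := key m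
    exact ⟨k, hk, hk2⟩
  have hmain : (⋂ m, D m).Nonempty :=
    IsCompact.nonempty_iInter_of_directed_nonempty_isCompact_isClosed _
      ((Antitone.directed_ge (fun a b h => Set.inter_subset_inter_left _
        (powClos_antitone s h)))) hDne (fun m => (hDcl m).isCompact) hDcl
  obtain ⟨k, hk⟩ := hmain
  refine ⟨k, ?_, ?_⟩
  · exact Set.mem_iInter.2 fun m => (Set.mem_iInter.1 hk m).1
  · exact (Set.mem_iInter.1 hk 0).2

/-- Step 2: division by any element of the closure. -/
lemma powClos_div {s x z : S} (hx : x ∈ powClos s 0) (hz : z ∈ powKer s) :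
    ∃ k ∈ powKer s, x * k = z := by
  set E : Set S := {x | ∃ k ∈ powKer s, x * k = z} with hE
  have hKcl : IsClosed (powKer s) := isClosed_iInter (isClosed_powClos s)
  have hEcl : IsClosed E := by
    have : E = Prod.fst '' ({p : S × S | p.2 ∈ powKer s ∧ p.1 * p.2 = z}) := by
      ext a
      constructor
      · rintro ⟨k, hk, hk2⟩; exact ⟨(a, k), ⟨hk, hk2⟩, rfl⟩
      · rintro ⟨⟨a', k⟩, ⟨hk, hk2⟩, rfl⟩; exact ⟨k, hk, hk2⟩
    rw [this]
    have hcl : IsClosed {p : S × S | p.2 ∈ powKer s ∧ p.1 * p.2 = z} :=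
      (hKcl.preimage continuous_snd).inter (isClosed_eq continuous_mul continuous_const)
    exact (hcl.isCompact.image continuous_fst).isClosed
  have hEsub : powClos s 0 ⊆ E := by
    apply closure_minimal ?_ hEcl
    rintro _ ⟨n, -, rfl⟩
    exact spow_div n hz
  exact hEsub hx

end Aux

/-- In a compact Hausdorff totally disconnected topological semigroup
(a profinite semigroup), the closure of the set of positive powers of any
element `s` contains exactly one idempotent.
(Well-definedness of the ω-power on profinite semigroups.) -/
theorem unique_idempotent_in_closure_of_powers {S : Type*} [Semigroup S]
    [TopologicalSpace S] [CompactSpace S] [T2Space S]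
    [TotallyDisconnectedSpace S] [ContinuousMul S] (s : S) :
    ∃! e : S, e ∈ closure (Set.range (spow s)) ∧ e * e = e := by
  obtain ⟨x, hx⟩ := powKer_nonempty s
  have hx0 : x ∈ powClos s 0 := powKer_subset s 0 hx
  obtain ⟨e, he, hxe⟩ := powClos_div hx0 hx
  have he0 : e ∈ powClos s 0 := powKer_subset s 0 he
  obtain ⟨y, hy, hxy⟩ := powClos_div hx0 he
  have hy0 : y ∈ powClos s 0 := powKer_subset s 0 hy
  have hee : e * e = e := by
    calc e * e = x * y * e := by rw [hxy]
    _ = x * (e * y) := by rw [mul_assoc, powClos_comm hy0 he0]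
    _ = x * e * y := by rw [mul_assoc]
    _ = x * y := by rw [hxe]
    _ = e := hxy
  -- every idempotent in the closure lies in the kernel
  have mem_ker : ∀ f : S, f ∈ closure (Set.range (spow s)) → f * f = f → f ∈ powKer s := by
    intro f hf hff
    have hf0 : f ∈ powClos s 0 := by rwa [powClos_zero]
    refine Set.mem_iInter.2 fun n => ?_
    induction n with
    | zero => exact hf0
    | succ n ih =>
      have := mul_mem_powClos (s := s) ih hf0
      rwa [hff] at this
  refine ⟨e, ⟨by rwa [← powClos_zero], hee⟩, ?_⟩
  rintro f ⟨hf, hff⟩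
  have hfK : f ∈ powKer s := mem_ker f hf hff
  have heK : e ∈ powKer s := he
  have hf0 : f ∈ powClos s 0 := powKer_subset s 0 hfK
  obtain ⟨k, hk, hek⟩ := powClos_div he0 hfK
  obtain ⟨k', hk', hfk'⟩ := powClos_div hf0 heK
  have h1 : e * f = f := by
    calc e * f = e * (e * k) := by rw [hek]
    _ = e * e * k := by rw [mul_assoc]
    _ = e * k := by rw [hee]
    _ = f := hek
  have h2 : f * e = e := by
    calc f * e = f * (f * k') := by rw [hfk']
    _ = f * f * k' := by rw [mul_assoc]
    _ = f * k' := by rw [hff]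
    _ = e := hfk'
  rw [← h2, powClos_comm hf0 he0, h1]
end
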